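/- Let α ∈ (0,1] and let (z)_n := z·(z−1)·(z−2)⋯(z−n+1) denote the falling factorial polynomial of degree n (with (z)_0 := 1). Then every entire function f : ℂ → ℂ satisfying sup_{z∈ℂ}|f(z)|·exp(−t|z|^α) < ∞ for all t > 0 admits a unique sequence (c_n)_{n≥0} of complex numbers such that for every t > 0, sup_{z∈ℂ} |f(z) − Σ_{n=0}^N c_n·(z)_n| · exp(−t·|z|^α) → 0 as N → ∞. -/

import Mathlib

open Finset intervalIntegral

/-- Stirling numbers of the second kind. -/
def Stir : ℕ → ℕ → ℕ
  | 0, 0 => 1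
  | 0, _ + 1 => 0
  | _ + 1, 0 => 0
  | k + 1, n + 1 => (n + 1) * Stir k (n + 1) + Stir k n

lemma Stir_eq_zero : ∀ k n : ℕ, k < n → Stir k n = 0 := by
  intro k
  induction k with
  | zero => intro n hn; match n, hn with | n + 1, _ => rfl
  | succ k ih =>
    intro n hn
    match n, hn with
    | n + 1, hn =>
      show (n + 1) * Stir k (n + 1) + Stir k n = 0
      rw [ih (n+1) (by omega), ih n (by omega)]
      ring

lemma Stir_le : ∀ k n : ℕ, Stir k n ≤ (n + 1) ^ k := by
  intro k
  induction k with
  | zero => intro n; cases n <;> simp [Stir]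
  | succ k ih =>
    intro n
    cases n with
    | zero => exact Nat.zero_le _
    | succ n =>
      show (n + 1) * Stir k (n + 1) + Stir k n ≤ (n + 2) ^ (k + 1)
      calc (n + 1) * Stir k (n + 1) + Stir k n
          ≤ (n + 1) * (n + 2) ^ k + (n + 1) ^ k :=
            Nat.add_le_add (Nat.mul_le_mul_left _ (ih (n+1))) (ih n)
        _ ≤ (n + 1) * (n + 2) ^ k + (n + 2) ^ k := by
            have : (n + 1 : ℕ) ^ k ≤ (n + 2) ^ k := Nat.pow_le_pow_left (by omega) k
            omega
        _ = (n + 2) ^ (k + 1) := by ring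

/-- Expansion of powers in falling factorials. -/
lemma pow_eq_sum_stir {R : Type*} [CommRing R] : ∀ (k : ℕ) (z : R),
    z ^ k = ∑ n ∈ range (k + 1), (Stir k n : R) * ∏ i ∈ range n, (z - (i : R)) := by
  intro k
  induction k with
  | zero => intro z; simp [Stir]
  | succ k ih =>
    intro z
    have key : ∀ n : ℕ, z * ∏ i ∈ range n, (z - (i : R))
        = (∏ i ∈ range (n+1), (z - (i : R))) + (n : R) * ∏ i ∈ range n, (z - (i : R)) := by
      intro n
      rw [prod_range_succ]
      ring
    have h1 : z ^ (k + 1) = ∑ n ∈ range (k + 1),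
        ((Stir k n : R) * ∏ i ∈ range (n+1), (z - (i : R))
          + (Stir k n : R) * ((n : R) * ∏ i ∈ range n, (z - (i : R)))) := by
      calc z ^ (k+1) = z * z ^ k := by ring
        _ = ∑ n ∈ range (k + 1), (Stir k n : R) * (z * ∏ i ∈ range n, (z - (i : R))) := by
            rw [ih, mul_sum]; exact Finset.sum_congr rfl fun n _ => by ring
        _ = _ := Finset.sum_congr rfl fun n _ => by rw [key n]; ring
    rw [h1, sum_add_distrib]
    have h2 : ∑ n ∈ range (k + 1), (Stir k n : R) * ((n : R) * ∏ i ∈ range n, (z - (i : R)))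
        = ∑ n ∈ range (k + 2), (Stir k n : R) * ((n : R) * ∏ i ∈ range n, (z - (i : R))) := by
      rw [sum_range_succ (n := k+1), Stir_eq_zero k (k+1) (by omega)]
      simp
    have h3 : ∑ n ∈ range (k + 2), (Stir k n : R) * ((n : R) * ∏ i ∈ range n, (z - (i : R)))
        = ∑ n ∈ range (k + 1), ((n + 1 : ℕ) : R) * (Stir k (n+1) : R)
            * ∏ i ∈ range (n+1), (z - (i : R)) := by
      rw [sum_range_succ' (n := k+1)]
      simp only [Nat.cast_zero, zero_mul, mul_zero, add_zero]
      exact Finset.sum_congr rfl fun n _ => by push_cast; ring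
    rw [h2, h3, ← sum_add_distrib]
    rw [sum_range_succ' (n := k+1)]
    show _ = (∑ n ∈ range (k+1), (Stir (k+1) (n+1) : R) * ∏ i ∈ range (n+1), (z - (i:R)))
        + (Stir (k+1) 0 : R) * ∏ i ∈ range 0, (z - (i:R))
    have h0 : Stir (k+1) 0 = 0 := rfl
    rw [h0]
    simp only [Nat.cast_zero, zero_mul, add_zero]
    refine Finset.sum_congr rfl fun n _ => ?_
    have hrec : Stir (k+1) (n+1) = (n + 1) * Stir k (n + 1) + Stir k n := rfl
    rw [hrec]
    push_cast
    ring

lemma sum_stir_ff_le (k : ℕ) (z : ℂ) :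
    ∑ n ∈ range (k + 1), (Stir k n : ℝ) * ‖∏ i ∈ range n, (z - (i : ℂ))‖
      ≤ (‖z‖ + k) ^ k := by
  set x : ℝ := ‖z‖ + k with hx
  have hxk : (k : ℝ) ≤ x := le_add_of_nonneg_left (norm_nonneg z)
  have step1 : ∀ n ∈ range (k + 1),
      ‖∏ i ∈ range n, (z - (i : ℂ))‖ ≤ ∏ i ∈ range n, (x - (i : ℝ)) := by
    intro n hn
    have hnk : n ≤ k := by simpa using Nat.lt_succ_iff.mp (mem_range.mp hn)
    rw [Complex.norm_prod]
    rw [← Finset.prod_range_reflect (fun i => ‖z - (i : ℂ)‖) n]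
    refine Finset.prod_le_prod (fun i _ => by positivity) (fun j hj => ?_)
    have hj' : j < n := mem_range.mp hj
    calc ‖z - ((n - 1 - j : ℕ) : ℂ)‖
        ≤ ‖z‖ + ‖((n - 1 - j : ℕ) : ℂ)‖ :=
          norm_sub_le _ _
      _ = ‖z‖ + ((n - 1 - j : ℕ) : ℝ) := by
          rw [Complex.norm_natCast]
      _ ≤ ‖z‖ + (((k - j : ℕ) : ℝ)) := by
          have : (n - 1 - j : ℕ) ≤ (k - j : ℕ) := by omega
          exact add_le_add le_rfl (Nat.cast_le.mpr this)
      _ ≤ x - (j : ℝ) := by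
          have : ((k - j : ℕ) : ℝ) = (k : ℝ) - j := by
            rw [Nat.cast_sub (by omega)]
          rw [this, hx]; ring_nf; rfl
  calc ∑ n ∈ range (k + 1), (Stir k n : ℝ) * ‖∏ i ∈ range n, (z - (i : ℂ))‖
      ≤ ∑ n ∈ range (k + 1), (Stir k n : ℝ) * ∏ i ∈ range n, (x - (i : ℝ)) := by
        refine Finset.sum_le_sum fun n hn => ?_
        exact mul_le_mul_of_nonneg_left (step1 n hn) (by positivity)
    _ = x ^ k := (pow_eq_sum_stir k x).symm

lemma cauchy_coeff_bound (f : ℂ → ℂ) (hf : Differentiable ℂ f) (M R : ℝ) (hR : 0 < R)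
    (hM : ∀ z : ℂ, ‖z‖ = R → ‖f z‖ ≤ M) (k : ℕ) :
    ‖(cauchyPowerSeries f 0 ((1:NNReal):ℝ)).coeff k‖ * R ^ k ≤ M := by
  have hp1 : HasFPowerSeriesOnBall f (cauchyPowerSeries f 0 ((1:NNReal):ℝ)) 0 ⊤ :=
    hf.hasFPowerSeriesOnBall 0 one_pos
  have hpR : HasFPowerSeriesOnBall f (cauchyPowerSeries f 0 ((⟨R, hR.le⟩:NNReal):ℝ)) 0 ⊤ :=
    hf.hasFPowerSeriesOnBall 0 hR
  have heq : cauchyPowerSeries f 0 ((1:NNReal):ℝ) = cauchyPowerSeries f 0 R :=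
    hp1.hasFPowerSeriesAt.eq_formalMultilinearSeries hpR.hasFPowerSeriesAt
  have hcoeff : ‖(cauchyPowerSeries f 0 ((1:NNReal):ℝ)).coeff k‖
      ≤ ‖cauchyPowerSeries f 0 R k‖ := by
    rw [heq, ← FormalMultilinearSeries.norm_apply_eq_norm_coef]
  have hint : ∫ θ : ℝ in (0)..2 * Real.pi, ‖f (circleMap 0 R θ)‖ ≤ 2 * Real.pi * M := by
    have h1 : ∫ θ : ℝ in (0)..2 * Real.pi, ‖f (circleMap 0 R θ)‖
        ≤ ∫ _θ : ℝ in (0)..2 * Real.pi, M := by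
      refine integral_mono_on Real.two_pi_pos.le ?_ (intervalIntegrable_const) ?_
      · exact ((hf.continuous.norm).comp (continuous_circleMap 0 R)).intervalIntegrable _ _
      · intro θ _
        exact hM _ (by rw [norm_circleMap_zero, abs_of_pos hR])
    simpa using h1
  have hM0 : 0 ≤ M := by
    have := hM (R : ℂ) (by rwa [Complex.norm_real, Real.norm_eq_abs, abs_of_pos])
    exact le_trans (norm_nonneg _) this
  have hnorm := norm_cauchyPowerSeries_le f 0 R k
  have habs : |R| = R := abs_of_pos hR
  calc ‖(cauchyPowerSeries f 0 ((1:NNReal):ℝ)).coeff k‖ * R ^ k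
      ≤ ‖cauchyPowerSeries f 0 R k‖ * R ^ k :=
        mul_le_mul_of_nonneg_right hcoeff (by positivity)
    _ ≤ (((2 * Real.pi)⁻¹ * ∫ θ : ℝ in (0)..2 * Real.pi, ‖f (circleMap 0 R θ)‖) * |R|⁻¹ ^ k)
          * R ^ k :=
        mul_le_mul_of_nonneg_right hnorm (by positivity)
    _ ≤ (((2 * Real.pi)⁻¹ * (2 * Real.pi * M)) * |R|⁻¹ ^ k) * R ^ k := by
        have h2 : (0:ℝ) ≤ |R|⁻¹ ^ k := by positivity
        have h3 : (0:ℝ) ≤ (2 * Real.pi)⁻¹ := by positivity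
        have h4 : (0:ℝ) ≤ R ^ k := by positivity
        exact mul_le_mul_of_nonneg_right
          (mul_le_mul_of_nonneg_right (mul_le_mul_of_nonneg_left hint h3) h2) h4
    _ = M := by
        rw [habs]
        field_simp
        rw [one_div, inv_pow, mul_assoc, inv_mul_cancel₀ (pow_ne_zero _ hR.ne'), mul_one]

lemma boundA (α s C : ℝ) (hα : 0 < α) (hα1 : α ≤ 1) (hs : 0 < s)
    (hs2 : s ^ α⁻¹ ≤ 1 / (4 * Real.exp 1)) (a : ℕ → ℂ) (ha0 : ‖a 0‖ ≤ C)
    (hcauchy : ∀ R : ℝ, 0 < R → ∀ k : ℕ, ‖a k‖ * R ^ k ≤ C * Real.exp (s * R ^ α)) :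
    ∀ k : ℕ, ‖a k‖ * (2 * (k : ℝ)) ^ k ≤ C * (1 / 2) ^ k := by
  intro k
  have hE : (0:ℝ) < Real.exp 1 := Real.exp_pos 1
  rcases Nat.eq_zero_or_pos k with rfl | hk
  · simpa using ha0
  have hk1 : (1 : ℝ) ≤ (k : ℝ) := by exact_mod_cast hk
  have hkpos : (0 : ℝ) < (k : ℝ) := by linarith
  have hdiv : (0 : ℝ) < (k : ℝ) / s := div_pos hkpos hs
  set R : ℝ := ((k : ℝ) / s) ^ α⁻¹ with hR
  have hRpos : 0 < R := Real.rpow_pos_of_pos hdiv _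
  have hRα : R ^ α = (k : ℝ) / s := by
    rw [hR, ← Real.rpow_mul hdiv.le, inv_mul_cancel₀ hα.ne', Real.rpow_one]
  have hck : ‖a k‖ * R ^ k ≤ C * Real.exp 1 ^ k := by
    have := hcauchy R hRpos k
    rwa [hRα, mul_div_cancel₀ _ hs.ne', ← mul_one (k:ℝ), Real.exp_nat_mul] at this
  have h1α : (1 : ℝ) ≤ α⁻¹ := (one_le_inv₀ hα).mpr hα1
  have h3 : (k : ℝ) ≤ (k : ℝ) ^ α⁻¹ := by
    calc (k : ℝ) = (k : ℝ) ^ (1 : ℝ) := (Real.rpow_one _).symm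
      _ ≤ (k : ℝ) ^ α⁻¹ := Real.rpow_le_rpow_of_exponent_le hk1 h1α
  have hspos : (0 : ℝ) < s ^ α⁻¹ := Real.rpow_pos_of_pos hs _
  have h4 : 4 * Real.exp 1 ≤ (s ^ α⁻¹)⁻¹ := by
    rw [← one_div, le_div_iff₀ hspos]
    calc 4 * Real.exp 1 * s ^ α⁻¹ ≤ 4 * Real.exp 1 * (1 / (4 * Real.exp 1)) :=
          mul_le_mul_of_nonneg_left hs2 (by positivity)
      _ = 1 := by field_simp
  have hq : 4 * Real.exp 1 * (k : ℝ) ≤ R := by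
    have hReq : R = (k : ℝ) ^ α⁻¹ * (s ^ α⁻¹)⁻¹ := by
      rw [hR, Real.div_rpow hkpos.le hs.le, div_eq_mul_inv]
    calc 4 * Real.exp 1 * (k : ℝ) = (k : ℝ) * (4 * Real.exp 1) := by ring
      _ ≤ (k : ℝ) ^ α⁻¹ * (s ^ α⁻¹)⁻¹ :=
          mul_le_mul h3 h4 (by positivity) (by positivity)
      _ = R := hReq.symm
  have hC0 : 0 ≤ C := le_trans (norm_nonneg _) ha0
  have h2k : 2 * (k : ℝ) ≤ R / (2 * Real.exp 1) := by
    rw [le_div_iff₀ (by positivity)]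
    nlinarith
  calc ‖a k‖ * (2 * (k : ℝ)) ^ k
      ≤ ‖a k‖ * (R / (2 * Real.exp 1)) ^ k :=
        mul_le_mul_of_nonneg_left (pow_le_pow_left₀ (by positivity) h2k k) (norm_nonneg _)
    _ = (‖a k‖ * R ^ k) * (1 / (2 * Real.exp 1)) ^ k := by
        rw [div_eq_mul_one_div, mul_pow]; ring
    _ ≤ (C * Real.exp 1 ^ k) * (1 / (2 * Real.exp 1)) ^ k :=
        mul_le_mul_of_nonneg_right hck (by positivity)
    _ = C * (Real.exp 1 * (1 / (2 * Real.exp 1))) ^ k := by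
        rw [mul_pow]; ring
    _ = C * (1 / 2) ^ k := by
        congr 2
        field_simp

lemma boundB (α s t C : ℝ) (hα : 0 < α) (hs : 0 < s) (hst : s * (4:ℝ) ^ α ≤ t)
    (a : ℕ → ℂ) (ha0 : ‖a 0‖ ≤ C)
    (hcauchy : ∀ R : ℝ, 0 < R → ∀ k : ℕ, ‖a k‖ * R ^ k ≤ C * Real.exp (s * R ^ α)) :
    ∀ (k : ℕ) (z : ℂ), ‖a k‖ * (2 * ‖z‖) ^ k
      ≤ C * Real.exp (t * ‖z‖ ^ α) * (1 / 2) ^ k := by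
  intro k z
  have hC0 : 0 ≤ C := le_trans (norm_nonneg _) ha0
  rcases eq_or_lt_of_le (norm_nonneg z) with hz | hz
  · rcases Nat.eq_zero_or_pos k with rfl | hk
    · simp only [pow_zero, mul_one]
      have h0 : t * ‖z‖ ^ α = 0 := by
        rw [← hz, Real.zero_rpow hα.ne', mul_zero]
      rw [h0, Real.exp_zero, mul_one]
      exact ha0
    · rw [← hz]
      rw [mul_zero, zero_pow hk.ne', mul_zero]
      positivity
  · set r := ‖z‖ with hr
    have h4r : (0:ℝ) < 4 * r := by linarith
    have h := hcauchy (4 * r) h4r k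
    have h4α : (4 * r) ^ α = (4:ℝ) ^ α * r ^ α := Real.mul_rpow (by norm_num) (by linarith)
    have hexp : Real.exp (s * (4 * r) ^ α) ≤ Real.exp (t * r ^ α) := by
      apply Real.exp_le_exp.mpr
      rw [h4α, ← mul_assoc]
      exact mul_le_mul_of_nonneg_right hst (Real.rpow_nonneg (by linarith) _)
    calc ‖a k‖ * (2 * r) ^ k = (‖a k‖ * (4 * r) ^ k) * (1 / 2) ^ k := by
          rw [mul_assoc, ← mul_pow]; ring_nf
      _ ≤ (C * Real.exp (t * r ^ α)) * (1 / 2) ^ k := by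
          refine mul_le_mul_of_nonneg_right (le_trans h ?_) (by positivity)
          exact mul_le_mul_of_nonneg_left hexp hC0

lemma hasSum_coeff (f : ℂ → ℂ) (hf : Differentiable ℂ f) (z : ℂ) :
    HasSum (fun k => (cauchyPowerSeries f 0 ((1:NNReal):ℝ)).coeff k * z ^ k) (f z) := by
  have hp1 : HasFPowerSeriesOnBall f (cauchyPowerSeries f 0 ((1:NNReal):ℝ)) 0 ⊤ :=
    hf.hasFPowerSeriesOnBall 0 one_pos
  have h := hp1.hasSum (y := z) (by simp)
  simp only [zero_add] at h
  have e : (fun k => (cauchyPowerSeries f 0 ((1:NNReal):ℝ)).coeff k * z ^ k)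
      = fun n => (cauchyPowerSeries f 0 ((1:NNReal):ℝ) n) fun _ => z := by
    funext k
    rw [FormalMultilinearSeries.apply_eq_pow_smul_coeff, smul_eq_mul, mul_comm]
  rw [e]; exact h

/-- Setup: coefficient bounds for the Taylor coefficients of `f`. -/
lemma setup_bounds (α : ℝ) (hα : 0 < α) (hα1 : α ≤ 1)
    (f : ℂ → ℂ) (hf : Differentiable ℂ f)
    (hmin : ∀ t : ℝ, 0 < t → BddAbove (Set.range fun z : ℂ =>
      ‖f z‖ * Real.exp (-t * ‖z‖ ^ α)))
    (t : ℝ) (ht : 0 < t) :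
    ∃ C : ℝ, 0 ≤ C ∧
      (∀ k : ℕ, ‖(cauchyPowerSeries f 0 ((1:NNReal):ℝ)).coeff k‖ * (2 * (k : ℝ)) ^ k
        ≤ C * (1 / 2) ^ k) ∧
      (∀ (k : ℕ) (z : ℂ), ‖(cauchyPowerSeries f 0 ((1:NNReal):ℝ)).coeff k‖
          * (2 * ‖z‖) ^ k
        ≤ C * Real.exp (t * ‖z‖ ^ α) * (1 / 2) ^ k) := by
  set a : ℕ → ℂ := fun k => (cauchyPowerSeries f 0 ((1:NNReal):ℝ)).coeff k with ha
  set s : ℝ := min (t / (4:ℝ) ^ α) ((1 / (4 * Real.exp 1)) ^ α) with hsdef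
  have h4α : (0:ℝ) < (4:ℝ) ^ α := Real.rpow_pos_of_pos (by norm_num) _
  have hE : (0:ℝ) < Real.exp 1 := Real.exp_pos 1
  have hs : 0 < s := lt_min (div_pos ht h4α) (Real.rpow_pos_of_pos (by positivity) _)
  have hst : s * (4:ℝ) ^ α ≤ t := by
    have h1 := min_le_left (t / (4:ℝ) ^ α) ((1 / (4 * Real.exp 1)) ^ α)
    rw [← hsdef] at h1
    calc s * (4:ℝ) ^ α ≤ (t / (4:ℝ) ^ α) * (4:ℝ) ^ α :=
          mul_le_mul_of_nonneg_right h1 h4α.le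
      _ = t := by field_simp
  have hs2 : s ^ α⁻¹ ≤ 1 / (4 * Real.exp 1) := by
    have h1 : s ≤ (1 / (4 * Real.exp 1)) ^ α := min_le_right _ _
    calc s ^ α⁻¹ ≤ ((1 / (4 * Real.exp 1)) ^ α) ^ α⁻¹ :=
          Real.rpow_le_rpow hs.le h1 (by positivity)
      _ = 1 / (4 * Real.exp 1) := by
          rw [← Real.rpow_mul (by positivity), mul_inv_cancel₀ hα.ne', Real.rpow_one]
  obtain ⟨C, hC⟩ := hmin s hs
  have hCz : ∀ z : ℂ, ‖f z‖ * Real.exp (-s * ‖z‖ ^ α) ≤ C :=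
    fun z => hC (Set.mem_range_self z)
  have hC0 : 0 ≤ C := le_trans (by positivity) (hCz 0)
  have hfz : ∀ z : ℂ, ‖f z‖ ≤ C * Real.exp (s * ‖z‖ ^ α) := by
    intro z
    have h1 := hCz z
    have h2 : Real.exp (-s * ‖z‖ ^ α) = (Real.exp (s * ‖z‖ ^ α))⁻¹ := by
      rw [← Real.exp_neg]; ring_nf
    rw [h2] at h1
    have h3 : (0:ℝ) < Real.exp (s * ‖z‖ ^ α) := Real.exp_pos _
    calc ‖f z‖
        = ‖f z‖ * (Real.exp (s * ‖z‖ ^ α))⁻¹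
            * Real.exp (s * ‖z‖ ^ α) := by field_simp
      _ ≤ C * Real.exp (s * ‖z‖ ^ α) := mul_le_mul_of_nonneg_right h1 h3.le
  have hcauchy : ∀ R : ℝ, 0 < R → ∀ k : ℕ, ‖a k‖ * R ^ k ≤ C * Real.exp (s * R ^ α) := by
    intro R hR k
    refine cauchy_coeff_bound f hf _ R hR (fun z hz => ?_) k
    rw [← hz]
    exact hfz z
  have ha0 : ‖a 0‖ ≤ C := by
    have h1 := hasSum_coeff f hf 0
    have h2 : HasSum (fun k => a k * (0:ℂ) ^ k) (a 0) := by
      have h3 := hasSum_single (f := fun k => a k * (0:ℂ) ^ k) 0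
        (fun b hb => by show a b * (0:ℂ) ^ b = 0; rw [zero_pow hb, mul_zero])
      simpa using h3
    have h3 : a 0 = f 0 := h2.unique h1
    rw [h3]
    have h4 := hfz 0
    simpa [Real.zero_rpow hα.ne'] using h4
  exact ⟨C, hC0, boundA α s C hα hα1 hs hs2 a ha0 hcauchy,
    boundB α s t C hα hs hst a ha0 hcauchy⟩

set_option maxHeartbeats 2000000 in
/-- The key estimate, abstract version. -/
lemma key_estimate (α t : ℝ) (hα : 0 < α) (ht : 0 < t)
    (f : ℂ → ℂ) (a : ℕ → ℂ) (C : ℝ) (hC0 : 0 ≤ C)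
    (hasum : ∀ z : ℂ, HasSum (fun k => a k * z ^ k) (f z))
    (hA : ∀ k : ℕ, ‖a k‖ * (2 * (k : ℝ)) ^ k ≤ C * (1 / 2) ^ k)
    (hB : ∀ (k : ℕ) (z : ℂ), ‖a k‖ * (2 * ‖z‖) ^ k
      ≤ C * Real.exp (t * ‖z‖ ^ α) * (1 / 2) ^ k) :
    ∀ (N : ℕ) (z : ℂ),
      ‖f z - ∑ n ∈ Finset.range (N + 1),
          (∑' k : ℕ, a k * (Stir k n : ℂ)) * ∏ i ∈ Finset.range n, (z - (i : ℂ))‖ *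
        Real.exp (-t * ‖z‖ ^ α) ≤ (4 * C) * (1 / 2) ^ N := by
  have hgeo : Summable (fun k : ℕ => C * (1 / 2 : ℝ) ^ k) :=
    (summable_geometric_of_lt_one (by norm_num) (by norm_num)).mul_left C
  have hSB : ∀ n k : ℕ, ‖a k * (Stir k n : ℂ)‖ ≤ C * (1 / 2) ^ k := by
    intro n k
    have ha0 : ‖a 0‖ ≤ C := by simpa using hA 0
    rw [norm_mul, Complex.norm_natCast]
    rcases Nat.eq_zero_or_pos k with rfl | hk
    · have h1 : Stir 0 n ≤ 1 := by simpa using Stir_le 0 n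
      calc ‖a 0‖ * (Stir 0 n : ℝ) ≤ ‖a 0‖ * 1 :=
            mul_le_mul_of_nonneg_left (by exact_mod_cast h1) (norm_nonneg _)
        _ ≤ C * (1 / 2) ^ 0 := by simpa using ha0
    · rcases le_or_gt n k with hnk | hnk
      · have h1 : Stir k n ≤ (2 * k) ^ k :=
          calc Stir k n ≤ (n + 1) ^ k := Stir_le k n
            _ ≤ (2 * k) ^ k := Nat.pow_le_pow_left (by omega) k
        calc ‖a k‖ * (Stir k n : ℝ) ≤ ‖a k‖ * (2 * (k:ℝ)) ^ k := by
              refine mul_le_mul_of_nonneg_left ?_ (norm_nonneg _)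
              exact_mod_cast h1
          _ ≤ C * (1 / 2) ^ k := hA k
      · rw [Stir_eq_zero k n hnk]
        simp only [Nat.cast_zero, mul_zero]
        positivity
  have hsummable : ∀ n : ℕ, Summable (fun k => a k * (Stir k n : ℂ)) :=
    fun n => Summable.of_norm_bounded hgeo (hSB n)
  intro N z
  set E : ℝ := Real.exp (t * ‖z‖ ^ α) with hEdef
  have hE1 : 1 ≤ E := Real.one_le_exp (by positivity)
  set F : ℕ → ℂ := fun n => ∏ i ∈ Finset.range n, (z - (i : ℂ)) with hF
  set u : ℕ → ℂ := fun k =>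
    a k * (z ^ k - ∑ n ∈ range (N + 1), (Stir k n : ℂ) * F n) with hu
  have h_u_bound : ∀ k, ‖u k‖ ≤ 4 * C * E * (1 / 2) ^ k := by
    intro k
    have hff : ∑ n ∈ range (N + 1), (Stir k n : ℝ) * ‖F n‖
        ≤ (‖z‖ + k) ^ k := by
      rcases le_total N k with h1 | h1
      · have hsub : range (N + 1) ⊆ range (k + 1) := Finset.range_subset_range.mpr (by omega)
        refine le_trans (Finset.sum_le_sum_of_subset_of_nonneg
          hsub (fun i _ _ => by positivity)) ?_
        exact sum_stir_ff_le k z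
      · have h2 : ∑ n ∈ range (k + 1), (Stir k n : ℝ) * ‖F n‖
            = ∑ n ∈ range (N + 1), (Stir k n : ℝ) * ‖F n‖ := by
          refine Finset.sum_subset (Finset.range_subset_range.mpr (by omega)) ?_
          intro x hx hnx
          have hkx : k < x := by
            simp only [mem_range] at hx hnx
            omega
          rw [Stir_eq_zero k x hkx]
          simp
        rw [← h2]
        exact sum_stir_ff_le k z
    have habs : ‖z ^ k - ∑ n ∈ range (N + 1), (Stir k n : ℂ) * F n‖
        ≤ 2 * (‖z‖ + k) ^ k := by
      calc ‖z ^ k - ∑ n ∈ range (N + 1), (Stir k n : ℂ) * F n‖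
          ≤ ‖z ^ k‖ + ‖∑ n ∈ range (N + 1), (Stir k n : ℂ) * F n‖ := norm_sub_le _ _
        _ ≤ ‖z‖ ^ k + ∑ n ∈ range (N + 1), (Stir k n : ℝ) * ‖F n‖ := by
            refine add_le_add (le_of_eq (by rw [norm_pow])) ?_
            refine le_trans (norm_sum_le _ _) (le_of_eq (Finset.sum_congr rfl fun n _ => ?_))
            rw [norm_mul, Complex.norm_natCast]
        _ ≤ (‖z‖ + k) ^ k + (‖z‖ + k) ^ k := by
            refine add_le_add ?_ hff
            exact pow_le_pow_left₀ (norm_nonneg z)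
              (le_add_of_nonneg_right (by positivity)) k
        _ = 2 * (‖z‖ + k) ^ k := by ring
    have hmax : (‖z‖ + k) ^ k ≤ (2 * ‖z‖) ^ k + (2 * (k:ℝ)) ^ k := by
      rcases le_total (‖z‖) (k : ℝ) with h1 | h1
      · calc (‖z‖ + k) ^ k ≤ (2 * (k:ℝ)) ^ k :=
            pow_le_pow_left₀ (by positivity) (by linarith) k
          _ ≤ (2 * ‖z‖) ^ k + (2 * (k:ℝ)) ^ k :=
            le_add_of_nonneg_left (pow_nonneg (by positivity) k)
      · calc (‖z‖ + k) ^ k ≤ (2 * ‖z‖) ^ k :=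
            pow_le_pow_left₀ (by positivity) (by linarith) k
          _ ≤ (2 * ‖z‖) ^ k + (2 * (k:ℝ)) ^ k :=
            le_add_of_nonneg_right (pow_nonneg (by positivity) k)
    have hr : (0:ℝ) ≤ (1/2:ℝ) ^ k := by positivity
    calc ‖u k‖ = ‖a k‖ * ‖z ^ k - ∑ n ∈ range (N + 1), (Stir k n : ℂ) * F n‖ := norm_mul _ _
      _ ≤ ‖a k‖ * (2 * (‖z‖ + k) ^ k) :=
          mul_le_mul_of_nonneg_left habs (norm_nonneg _)
      _ ≤ ‖a k‖ * (2 * ((2 * ‖z‖) ^ k + (2 * (k:ℝ)) ^ k)) := by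
          refine mul_le_mul_of_nonneg_left ?_ (norm_nonneg _)
          linarith
      _ = 2 * (‖a k‖ * (2 * ‖z‖) ^ k) + 2 * (‖a k‖ * (2 * (k:ℝ)) ^ k) := by ring
      _ ≤ 2 * (C * E * (1 / 2) ^ k) + 2 * (C * (1 / 2) ^ k) := by
          refine add_le_add ?_ ?_
          · exact mul_le_mul_of_nonneg_left (hB k z) (by norm_num)
          · exact mul_le_mul_of_nonneg_left (hA k) (by norm_num)
      _ ≤ 4 * C * E * (1 / 2) ^ k := by
          nlinarith [mul_nonneg hC0 hr, mul_le_mul_of_nonneg_left hE1 (mul_nonneg hC0 hr)]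
  have h_u_zero : ∀ k ≤ N, u k = 0 := by
    intro k hk
    have h1 : (z : ℂ) ^ k = ∑ n ∈ range (N + 1), (Stir k n : ℂ) * F n := by
      rw [pow_eq_sum_stir k z]
      refine Finset.sum_subset (Finset.range_subset_range.mpr (by omega)) ?_
      intro x hx hnx
      have hkx : k < x := by
        simp only [mem_range] at hx hnx
        omega
      rw [Stir_eq_zero k x hkx]
      simp
    rw [hu]
    simp only [h1, sub_self, mul_zero]
  have hgeo2 : Summable (fun k : ℕ => 4 * C * E * (1 / 2 : ℝ) ^ k) :=
    (summable_geometric_of_lt_one (by norm_num) (by norm_num)).mul_left _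
  have h_u_norm_summable : Summable (fun k => ‖u k‖) :=
    Summable.of_nonneg_of_le (fun k => norm_nonneg _) h_u_bound hgeo2
  have hsum_u : HasSum u (f z - ∑ n ∈ range (N + 1),
      (∑' k : ℕ, a k * (Stir k n : ℂ)) * F n) := by
    have h1 : HasSum (fun k => a k * z ^ k) (f z) := hasum z
    have h2 : HasSum (fun k => ∑ n ∈ range (N + 1), (a k * (Stir k n : ℂ)) * F n)
        (∑ n ∈ range (N + 1), (∑' k : ℕ, a k * (Stir k n : ℂ)) * F n) := by
      refine hasSum_sum (fun n _ => ?_)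
      exact ((hsummable n).hasSum).mul_right (F n)
    have h3 := h1.sub h2
    have heq : (fun k => a k * z ^ k - ∑ n ∈ range (N + 1), (a k * (Stir k n : ℂ)) * F n)
        = u := by
      funext k
      rw [hu]
      show a k * z ^ k - ∑ n ∈ range (N + 1), (a k * (Stir k n : ℂ)) * F n
          = a k * (z ^ k - ∑ n ∈ range (N + 1), (Stir k n : ℂ) * F n)
      rw [mul_sub, Finset.mul_sum]
      congr 1
      exact Finset.sum_congr rfl fun n _ => by ring
    rwa [heq] at h3
  have hnorm : ‖f z - ∑ n ∈ range (N + 1),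
      (∑' k : ℕ, a k * (Stir k n : ℂ)) * F n‖ ≤ 4 * C * E * (1 / 2) ^ N := by
    rw [← hsum_u.tsum_eq]
    refine le_trans (norm_tsum_le_tsum_norm h_u_norm_summable) ?_
    have hsplit := Summable.sum_add_tsum_nat_add (f := fun k => ‖u k‖) (N + 1) h_u_norm_summable
    have hhead : ∑ k ∈ range (N + 1), ‖u k‖ = 0 := by
      refine Finset.sum_eq_zero fun k hk => ?_
      rw [h_u_zero k (by simp only [mem_range] at hk; omega)]
      simp
    have htail : ∑' k : ℕ, ‖u (k + (N + 1))‖ ≤ 4 * C * E * (1 / 2) ^ N := by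
      have hb : ∀ k : ℕ, ‖u (k + (N + 1))‖ ≤ (4 * C * E * (1 / 2) ^ (N + 1)) * (1 / 2) ^ k := by
        intro k
        calc ‖u (k + (N + 1))‖ ≤ 4 * C * E * (1 / 2) ^ (k + (N + 1)) := h_u_bound _
          _ = (4 * C * E * (1 / 2) ^ (N + 1)) * (1 / 2) ^ k := by rw [pow_add]; ring
      calc ∑' k : ℕ, ‖u (k + (N + 1))‖
          ≤ ∑' k : ℕ, (4 * C * E * (1 / 2) ^ (N + 1)) * (1 / 2 : ℝ) ^ k := by
            refine Summable.tsum_le_tsum hb ((summable_nat_add_iff (N + 1)).mpr h_u_norm_summable) ?_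
            exact (summable_geometric_of_lt_one (by norm_num) (by norm_num)).mul_left _
        _ = (4 * C * E * (1 / 2) ^ (N + 1)) * (1 - 1 / 2)⁻¹ := by
            rw [tsum_mul_left, tsum_geometric_of_lt_one (by norm_num) (by norm_num)]
        _ = 4 * C * E * (1 / 2) ^ N := by
            rw [pow_succ]
            norm_num
            ring
    calc ∑' k : ℕ, ‖u k‖ = ∑ k ∈ range (N + 1), ‖u k‖ + ∑' k : ℕ, ‖u (k + (N + 1))‖ :=
          hsplit.symm
      _ = ∑' k : ℕ, ‖u (k + (N + 1))‖ := by rw [hhead, zero_add]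
      _ ≤ 4 * C * E * (1 / 2) ^ N := htail
  have hexpinv : Real.exp (-t * ‖z‖ ^ α) = E⁻¹ := by
    rw [hEdef, ← Real.exp_neg]
    ring_nf
  calc ‖f z - ∑ n ∈ range (N + 1),
          (∑' k : ℕ, a k * (Stir k n : ℂ)) * F n‖ * Real.exp (-t * ‖z‖ ^ α)
      ≤ (4 * C * E * (1 / 2) ^ N) * Real.exp (-t * ‖z‖ ^ α) :=
        mul_le_mul_of_nonneg_right hnorm (Real.exp_pos _).le
    _ = (4 * C) * (1 / 2) ^ N * (E * E⁻¹) := by rw [hexpinv]; ring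
    _ = (4 * C) * (1 / 2) ^ N := by
        rw [mul_inv_cancel₀ (by positivity : E ≠ 0), mul_one]

/-- Falling-factorial (Newton series) case of the main theorem: every entire
function of order at most `α ∈ (0,1]` and minimal type has a unique expansion
in falling factorials, convergent in the topology of `E^α_min(ℂ)`. -/
theorem falling_factorial_expansion_Emin
    (α : ℝ) (hα : 0 < α) (hα1 : α ≤ 1)
    (f : ℂ → ℂ) (hf : Differentiable ℂ f)
    (hmin : ∀ t : ℝ, 0 < t → BddAbove (Set.range fun z : ℂ =>
      ‖f z‖ * Real.exp (-t * ‖z‖ ^ α))) :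
    ∃! c : ℕ → ℂ, ∀ t : ℝ, 0 < t → ∀ ε : ℝ, 0 < ε → ∃ N₀ : ℕ, ∀ N : ℕ, N₀ ≤ N →
      ∀ z : ℂ,
        ‖f z - ∑ n ∈ Finset.range (N + 1),
            c n * ∏ i ∈ Finset.range n, (z - (i : ℂ))‖ *
          Real.exp (-t * ‖z‖ ^ α) ≤ ε := by
  classical
  set a : ℕ → ℂ := fun k => (cauchyPowerSeries f 0 ((1:NNReal):ℝ)).coeff k with ha
  set c : ℕ → ℂ := fun n => ∑' k : ℕ, a k * (Stir k n : ℂ) with hc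
  have hprop : ∀ t : ℝ, 0 < t → ∀ ε : ℝ, 0 < ε → ∃ N₀ : ℕ, ∀ N : ℕ, N₀ ≤ N →
      ∀ z : ℂ,
        ‖f z - ∑ n ∈ Finset.range (N + 1),
            c n * ∏ i ∈ Finset.range n, (z - (i : ℂ))‖ *
          Real.exp (-t * ‖z‖ ^ α) ≤ ε := by
    intro t ht ε hε
    obtain ⟨C, hC0, hA, hB⟩ := setup_bounds α hα hα1 f hf hmin t ht
    have hkey := key_estimate α t hα ht f a C hC0 (hasSum_coeff f hf) hA hB
    have hD0 : (0:ℝ) ≤ 4 * C := by linarith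
    obtain ⟨N₀, hN₀⟩ := exists_pow_lt_of_lt_one
      (show (0:ℝ) < ε / (4 * C + 1) by positivity) (show (1/2 : ℝ) < 1 by norm_num)
    refine ⟨N₀, fun N hN z => ?_⟩
    calc ‖f z - ∑ n ∈ Finset.range (N + 1),
            c n * ∏ i ∈ Finset.range n, (z - (i : ℂ))‖ *
          Real.exp (-t * ‖z‖ ^ α)
        ≤ (4 * C) * (1 / 2) ^ N := hkey N z
      _ ≤ (4 * C) * (1 / 2) ^ N₀ :=
          mul_le_mul_of_nonneg_left
            (pow_le_pow_of_le_one (by norm_num) (by norm_num) hN) hD0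
      _ ≤ (4 * C) * (ε / (4 * C + 1)) :=
          mul_le_mul_of_nonneg_left (le_of_lt hN₀) hD0
      _ ≤ ε := by
          have h1 : (0:ℝ) < 4 * C + 1 := by linarith
          rw [mul_comm, div_mul_eq_mul_div, div_le_iff₀ h1]
          nlinarith
  refine ⟨c, hprop, ?_⟩
  -- uniqueness
  intro y hy
  -- both y and c satisfy the property; deduce y = c
  have hV : ∀ m : ℕ, ∑ n ∈ Finset.range (m + 1),
      (y n - c n) * ∏ i ∈ Finset.range n, (((m:ℕ) : ℂ) - (i : ℂ)) = 0 := by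
    intro m
    set zm : ℂ := ((m : ℕ) : ℂ) with hzm
    set V : ℂ := ∑ n ∈ Finset.range (m + 1),
      (y n - c n) * ∏ i ∈ Finset.range n, (zm - (i : ℂ)) with hVdef
    set w : ℝ := Real.exp (-(1:ℝ) * ‖zm‖ ^ α) with hw
    have hwpos : 0 < w := Real.exp_pos _
    have habs : ∀ ε : ℝ, 0 < ε → ‖V‖ * w ≤ 2 * ε := by
      intro ε hε
      obtain ⟨N₁, hN₁⟩ := hy 1 one_pos ε hε
      obtain ⟨N₂, hN₂⟩ := hprop 1 one_pos ε hε
      set N : ℕ := max (max N₁ N₂) m with hNdef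
      have e1 := hN₁ N (le_trans (le_max_left N₁ N₂) (le_max_left _ m)) zm
      have e2 := hN₂ N (le_trans (le_max_right N₁ N₂) (le_max_left _ m)) zm
      have hmN : m ≤ N := le_max_right _ m
      have hVeq : ∑ n ∈ Finset.range (N + 1),
          (y n - c n) * ∏ i ∈ Finset.range n, (zm - (i : ℂ)) = V := by
        rw [hVdef]
        refine (Finset.sum_subset (Finset.range_subset_range.mpr (by omega)) ?_).symm
        intro x hx hnx
        have hmx : m < x := by
          simp only [Finset.mem_range] at hx hnx
          omega
        have hzero : ∏ i ∈ Finset.range x, (zm - (i : ℂ)) = 0 := by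
          refine Finset.prod_eq_zero (Finset.mem_range.mpr hmx) ?_
          rw [hzm, sub_self]
        rw [hzero, mul_zero]
      have hsplit : V = (f zm - ∑ n ∈ Finset.range (N + 1),
            c n * ∏ i ∈ Finset.range n, (zm - (i : ℂ)))
          - (f zm - ∑ n ∈ Finset.range (N + 1),
            y n * ∏ i ∈ Finset.range n, (zm - (i : ℂ))) := by
        rw [← hVeq]
        calc ∑ n ∈ Finset.range (N + 1),
              (y n - c n) * ∏ i ∈ Finset.range n, (zm - (i : ℂ))
            = ∑ n ∈ Finset.range (N + 1),
                (y n * ∏ i ∈ Finset.range n, (zm - (i : ℂ))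
                  - c n * ∏ i ∈ Finset.range n, (zm - (i : ℂ))) :=
              Finset.sum_congr rfl fun n _ => by ring
          _ = _ := by rw [Finset.sum_sub_distrib]; ring
      calc ‖V‖ * w
          ≤ (‖f zm - ∑ n ∈ Finset.range (N + 1),
              c n * ∏ i ∈ Finset.range n, (zm - (i : ℂ))‖
            + ‖f zm - ∑ n ∈ Finset.range (N + 1),
              y n * ∏ i ∈ Finset.range n, (zm - (i : ℂ))‖) * w := by
            refine mul_le_mul_of_nonneg_right ?_ hwpos.le
            rw [hsplit]
            exact norm_sub_le _ _
        _ = ‖f zm - ∑ n ∈ Finset.range (N + 1),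
              c n * ∏ i ∈ Finset.range n, (zm - (i : ℂ))‖ * w
            + ‖f zm - ∑ n ∈ Finset.range (N + 1),
              y n * ∏ i ∈ Finset.range n, (zm - (i : ℂ))‖ * w := by ring
        _ ≤ ε + ε := add_le_add e2 e1
        _ = 2 * ε := by ring
    have hV0 : V = 0 := by
      by_contra hne
      have hpos : 0 < ‖V‖ := norm_pos_iff.mpr hne
      have h1 := habs (‖V‖ * w / 4) (by positivity)
      nlinarith
    exact hV0
  have hyc : ∀ n : ℕ, y n = c n := by
    intro n
    induction n using Nat.strong_induction_on with
    | _ n ih =>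
      have h1 := hV n
      rw [Finset.sum_range_succ] at h1
      have h2 : ∑ j ∈ Finset.range n,
          (y j - c j) * ∏ i ∈ Finset.range j, (((n:ℕ) : ℂ) - (i : ℂ)) = 0 := by
        refine Finset.sum_eq_zero fun j hj => ?_
        rw [ih j (Finset.mem_range.mp hj), sub_self, zero_mul]
      rw [h2, zero_add] at h1
      have h3 : ∏ i ∈ Finset.range n, (((n:ℕ) : ℂ) - (i : ℂ)) ≠ 0 := by
        refine Finset.prod_ne_zero_iff.mpr fun i hi => ?_
        have hin : i < n := Finset.mem_range.mp hi
        intro hzero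
        rw [sub_eq_zero] at hzero
        exact (Nat.cast_injective hzero ▸ hin).false
      have h4 : y n - c n = 0 := by
        rcases mul_eq_zero.mp h1 with h | h
        · exact h
        · exact absurd h h3
      exact sub_eq_zero.mp h4
  funext n
  exact hyc n
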